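/- arXiv:2510.03816 — 2 statements merged into one kernel-verified Lean document; each statement's English description precedes it below -/
import Mathlib

section
/- Let G and H be finite simple graphs on the same vertex set {1,…,n}, with adjacency matrices A(G), A(H) and degree matrices D(G), D(H), regarded as matrices over ℚ, and view A(G) − μD(G) and A(H) − μD(H) as matrices over the rational function field ℚ(μ). Then A(G) − μD(G) and A(H) − μD(H) are similar over ℚ(μ) if and only if G and H have the same generalized characteristic polynomial, i.e. det(tI − (A(G) − μD(G))) = det(tI − (A(H) − μD(H))) as polynomials in t over ℚ(μ). -/
set_option synthInstance.maxHeartbeats 1000000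
set_option maxHeartbeats 1000000

open Polynomial

namespace GCPAux

variable {n : ℕ}

/-- Similarity of square matrices over a commutative ring. -/
def Sim {α : Type*} [CommRing α] (A B : Matrix (Fin n) (Fin n) α) : Prop :=
  ∃ M : Matrix (Fin n) (Fin n) α, IsUnit M ∧ M⁻¹ * A * M = B

section Field

variable {α : Type*} [Field α]

lemma sim_helper {M : Matrix (Fin n) (Fin n) α} (hM : IsUnit M) :
    M⁻¹ * M = 1 ∧ M * M⁻¹ = 1 := by
  have hdet : IsUnit M.det := (Matrix.isUnit_iff_isUnit_det M).1 hM
  exact ⟨Matrix.nonsing_inv_mul M hdet, Matrix.mul_nonsing_inv M hdet⟩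

lemma sim_refl (A : Matrix (Fin n) (Fin n) α) : Sim A A :=
  ⟨1, isUnit_one, by simp⟩

lemma sim_symm {A B : Matrix (Fin n) (Fin n) α} (h : Sim A B) : Sim B A := by
  obtain ⟨M, hM, hconj⟩ := h
  obtain ⟨h1, h2⟩ := sim_helper hM
  have hMinv : IsUnit M⁻¹ := ⟨⟨M⁻¹, M, h1, h2⟩, rfl⟩
  refine ⟨M⁻¹, hMinv, ?_⟩
  have hdet : IsUnit M.det := (Matrix.isUnit_iff_isUnit_det M).1 hM
  rw [Matrix.nonsing_inv_nonsing_inv M hdet, ← hconj]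
  calc M * (M⁻¹ * A * M) * M⁻¹ = (M * M⁻¹) * A * (M * M⁻¹) := by
        simp only [← mul_assoc]
    _ = A := by rw [h2]; simp

lemma sim_trans {A B C : Matrix (Fin n) (Fin n) α} (h1 : Sim A B) (h2 : Sim B C) :
    Sim A C := by
  obtain ⟨M, hM, hMc⟩ := h1
  obtain ⟨N, hN, hNc⟩ := h2
  refine ⟨M * N, hM.mul hN, ?_⟩
  rw [Matrix.mul_inv_rev, ← hNc, ← hMc]
  simp only [← mul_assoc]

lemma charpoly_of_sim {A B : Matrix (Fin n) (Fin n) α} (h : Sim A B) :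
    A.charpoly = B.charpoly := by
  obtain ⟨M, hM, rfl⟩ := h
  obtain ⟨h1, h2⟩ := sim_helper hM
  symm
  rw [Matrix.charpoly, Matrix.charpoly]
  have hscal : (M⁻¹).map C * (Matrix.scalar (Fin n) (X : α[X])) * M.map C
      = Matrix.scalar (Fin n) (X : α[X]) := by
    rw [Matrix.scalar_apply, ← Matrix.smul_eq_mul_diagonal, Matrix.smul_mul,
      ← Matrix.map_mul, h1]
    simp [Matrix.smul_eq_diagonal_mul]
  have hch : Matrix.charmatrix (M⁻¹ * A * M)
      = (M⁻¹).map C * Matrix.charmatrix A * M.map C := by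
    rw [Matrix.charmatrix, Matrix.charmatrix]
    simp only [RingHom.mapMatrix_apply]
    rw [Matrix.map_mul, Matrix.map_mul, Matrix.mul_sub, Matrix.sub_mul]
    congr 1
    exact hscal.symm
  rw [hch, Matrix.det_mul, Matrix.det_mul]
  have hone : ((M⁻¹).map C).det * (M.map C).det = 1 := by
    rw [← Matrix.det_mul, ← Matrix.map_mul, h1]
    simp
  calc ((M⁻¹).map C).det * (Matrix.charmatrix A).det * (M.map C).det
      = (Matrix.charmatrix A).det * (((M⁻¹).map C).det * (M.map C).det) := by ring
    _ = (Matrix.charmatrix A).det := by rw [hone, mul_one]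

/-- Similarity of a diagonal matrix with a permuted diagonal matrix. -/
lemma sim_diag_perm (v : Fin n → α) (σ : Equiv.Perm (Fin n)) :
    Sim (Matrix.diagonal v) (Matrix.diagonal (v ∘ σ)) := by
  classical
  set P : Matrix (Fin n) (Fin n) α := Matrix.of fun i j => if i = σ j then (1 : α) else 0 with hP
  set Q : Matrix (Fin n) (Fin n) α := Matrix.of fun i j => if σ i = j then (1 : α) else 0 with hQ
  have hPQ : P * Q = 1 := by
    ext i j
    rw [Matrix.mul_apply]
    have : ∀ k, (P i k) * (Q k j)
        = (fun m => (if i = m then (1:α) else 0) * (if m = j then (1:α) else 0)) (σ k) := by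
      intro k
      simp [hP, hQ]
    simp only [this]
    rw [Equiv.sum_comp σ (fun m => (if i = m then (1:α) else 0) * (if m = j then (1:α) else 0))]
    simp [Matrix.one_apply, Finset.sum_ite_eq]
  have hQP : Q * P = 1 := by
    ext i j
    rw [Matrix.mul_apply]
    simp only [hP, hQ, Matrix.of_apply]
    rw [Finset.sum_eq_single (σ i)]
    · simp [Matrix.one_apply, EmbeddingLike.apply_eq_iff_eq]
    · intro k _ hk
      simp [Ne.symm hk]
    · simp
  have hUnit : IsUnit P := ⟨⟨P, Q, hPQ, hQP⟩, rfl⟩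
  refine ⟨P, hUnit, ?_⟩
  have hcomm : Matrix.diagonal v * P = P * Matrix.diagonal (v ∘ σ) := by
    ext i j
    rw [Matrix.diagonal_mul, Matrix.mul_diagonal]
    by_cases h : i = σ j <;> simp [hP, h]
  rw [Matrix.inv_eq_left_inv hQP, mul_assoc, hcomm, ← mul_assoc, hQP, one_mul]

end Field

section Descent

variable {F K : Type*} [Field F] [Field K] [Infinite F]

/-- Similarity descends along a field embedding when the base field is infinite. -/
lemma descent (φ : F →+* K) (A B : Matrix (Fin n) (Fin n) F)
    (h : Sim (A.map φ) (B.map φ)) : Sim A B := by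
  classical
  obtain ⟨M, hM, hconj⟩ := h
  obtain ⟨h1, h2⟩ := sim_helper hM
  have hAM : (A.map φ) * M = M * (B.map φ) := by
    calc (A.map φ) * M = (M * M⁻¹) * (A.map φ) * M := by rw [h2, one_mul]
      _ = M * (M⁻¹ * (A.map φ) * M) := by simp only [mul_assoc]
      _ = M * (B.map φ) := by rw [hconj]
  letI : Algebra F K := φ.toAlgebra
  set S : Submodule F K :=
    Submodule.span F (Set.range fun p : Fin n × Fin n => M p.1 p.2) with hS
  haveI : FiniteDimensional F S := FiniteDimensional.span_of_finite F (Set.finite_range _)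
  set d := Module.finrank F S with hd
  set b : Module.Basis (Fin d) F S := Module.finBasis F S with hb
  have hmem : ∀ i j, M i j ∈ S := fun i j => Submodule.subset_span ⟨(i, j), rfl⟩
  set P : Fin d → Matrix (Fin n) (Fin n) F :=
    fun l => Matrix.of fun i j => b.repr ⟨M i j, hmem i j⟩ l with hPdef
  have hsmul : ∀ (r : F) (x : K), r • x = φ r * x := fun r x => by
    rw [Algebra.smul_def, RingHom.algebraMap_toAlgebra]
  have hdecomp : ∀ i j, M i j = ∑ l, φ (P l i j) * (b l : K) := by
    intro i j
    have hrep := b.sum_repr ⟨M i j, hmem i j⟩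
    have hcoe := congrArg (Subtype.val) hrep
    rw [show M i j = ((⟨M i j, hmem i j⟩ : S) : K) from rfl, ← hcoe]
    push_cast
    exact Finset.sum_congr rfl fun l _ => by rw [← hsmul]; norm_cast
  have hli : LinearIndependent F (fun l => (b l : K)) := by
    have h' := b.linearIndependent.map' S.subtype (Submodule.ker_subtype S)
    exact h'
  have hsol : ∀ l, A * P l = P l * B := by
    have key : ∀ i j, ∑ l, φ ((A * P l) i j - (P l * B) i j) * (b l : K) = 0 := by
      intro i j
      have lhs : ∑ l, φ ((A * P l) i j) * (b l : K) = ((A.map φ) * M) i j := by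
        rw [Matrix.mul_apply]
        simp only [Matrix.map_apply, hdecomp, Finset.mul_sum]
        rw [Finset.sum_comm]
        refine Finset.sum_congr rfl fun l _ => ?_
        rw [Matrix.mul_apply, map_sum, Finset.sum_mul]
        refine Finset.sum_congr rfl fun k _ => ?_
        rw [map_mul, mul_assoc]
      have rhs : ∑ l, φ ((P l * B) i j) * (b l : K) = (M * (B.map φ)) i j := by
        rw [Matrix.mul_apply]
        simp only [Matrix.map_apply, hdecomp, Finset.sum_mul]
        rw [Finset.sum_comm]
        refine Finset.sum_congr rfl fun l _ => ?_
        rw [Matrix.mul_apply, map_sum, Finset.sum_mul]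
        refine Finset.sum_congr rfl fun k _ => ?_
        rw [map_mul]
        ring
      simp only [map_sub, sub_mul]
      rw [Finset.sum_sub_distrib, lhs, rhs, hAM, sub_self]
    have hz : ∀ i j l, (A * P l) i j - (P l * B) i j = 0 := by
      intro i j
      refine Fintype.linearIndependent_iff.mp hli
        (fun l => (A * P l) i j - (P l * B) i j) ?_
      rw [← key i j]
      exact Finset.sum_congr rfl fun l _ => (hsmul _ _)
    intro l
    ext i j
    exact sub_eq_zero.mp (hz i j l)
  set q : MvPolynomial (Fin d) F :=
    (Matrix.of fun i j => ∑ l, MvPolynomial.X l * MvPolynomial.C (P l i j)).det with hq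
  have haeval : (MvPolynomial.aeval fun l => (b l : K)) q = M.det := by
    rw [hq, AlgHom.map_det]
    congr 1
    ext i j
    rw [AlgHom.mapMatrix_apply, Matrix.map_apply, Matrix.of_apply, map_sum, hdecomp i j]
    refine Finset.sum_congr rfl fun l _ => ?_
    rw [map_mul, MvPolynomial.aeval_X]
    simp only [MvPolynomial.aeval_C, RingHom.algebraMap_toAlgebra]
    ring
  have hMdet : M.det ≠ 0 := ((Matrix.isUnit_iff_isUnit_det M).1 hM).ne_zero
  have hq0 : q ≠ 0 := fun h0 => hMdet (by rw [← haeval, h0, map_zero])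
  have hev : ∃ c : Fin d → F, MvPolynomial.eval c q ≠ 0 := by
    by_contra hcon
    push_neg at hcon
    exact hq0 (MvPolynomial.funext fun x => by rw [hcon x, map_zero])
  obtain ⟨c, hc⟩ := hev
  set P0 : Matrix (Fin n) (Fin n) F := ∑ l, c l • P l with hP0
  have hdet0 : P0.det = MvPolynomial.eval c q := by
    rw [hq, RingHom.map_det]
    congr 1
    ext i j
    rw [RingHom.mapMatrix_apply, Matrix.map_apply, Matrix.of_apply, map_sum, hP0,
      Matrix.sum_apply]
    refine (Finset.sum_congr rfl fun l _ => ?_).symm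
    rw [map_mul, MvPolynomial.eval_X, MvPolynomial.eval_C, Matrix.smul_apply, smul_eq_mul]
  have hunit : IsUnit P0 :=
    (Matrix.isUnit_iff_isUnit_det P0).2 (isUnit_iff_ne_zero.2 (by rw [hdet0]; exact hc))
  have hcommAB : A * P0 = P0 * B := by
    rw [hP0, Finset.mul_sum, Finset.sum_mul]
    refine Finset.sum_congr rfl fun l _ => ?_
    rw [Matrix.mul_smul, Matrix.smul_mul, hsol l]
  obtain ⟨g1, _g2⟩ := sim_helper hunit
  exact ⟨P0, hunit, by rw [mul_assoc, hcommAB, ← mul_assoc, g1, one_mul]⟩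

end Descent

section Real

lemma charpoly_diagonal {α : Type*} [CommRing α] (v : Fin n → α) :
    (Matrix.diagonal v).charpoly = ∏ i, (X - C (v i)) := by
  rw [Matrix.charpoly_of_upperTriangular _ (Matrix.blockTriangular_diagonal v)]
  simp

lemma sim_diagonal_eigenvalues {A : Matrix (Fin n) (Fin n) ℝ} (hA : A.IsHermitian) :
    Sim A (Matrix.diagonal hA.eigenvalues) := by
  set U : Matrix (Fin n) (Fin n) ℝ := (hA.eigenvectorUnitary : Matrix (Fin n) (Fin n) ℝ) with hU
  have hmem := hA.eigenvectorUnitary.2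
  rw [Unitary.mem_iff] at hmem
  have hsU : star U * U = 1 := hmem.1
  have hUs : U * star U = 1 := hmem.2
  have hunit : IsUnit U := ⟨⟨U, star U, hUs, hsU⟩, rfl⟩
  refine ⟨U, hunit, ?_⟩
  rw [Matrix.inv_eq_left_inv hsU]
  have hst : star U * A * U = Matrix.diagonal (RCLike.ofReal ∘ hA.eigenvalues) := by
    have h0 := hA.conjStarAlgAut_star_eigenvectorUnitary
    rw [Unitary.conjStarAlgAut_apply, Unitary.coe_star, star_star] at h0
    exact h0
  rw [hst]
  congr 1

lemma real_sim {A B : Matrix (Fin n) (Fin n) ℝ} (hA : A.IsHermitian) (hB : B.IsHermitian)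
    (h : A.charpoly = B.charpoly) : Sim A B := by
  classical
  have hsimA := sim_diagonal_eigenvalues hA
  have hsimB := sim_diagonal_eigenvalues hB
  set f := hA.eigenvalues with hf
  set g := hB.eigenvalues with hg
  have hprod : ∏ i, (X - C (f i)) = ∏ i, (X - C (g i)) := by
    rw [← charpoly_diagonal f, ← charpoly_diagonal g, ← charpoly_of_sim hsimA,
      ← charpoly_of_sim hsimB, h]
  have h1 : ∀ v : Fin n → ℝ, ∏ i, (X - C (v i))
      = ((Finset.univ.val.map v).map fun a => X - C a).prod := by
    intro v
    rw [Finset.prod_eq_multiset_prod, Multiset.map_map]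
    rfl
  have hms : (Finset.univ.val.map f) = (Finset.univ.val.map g) := by
    have hroots := congrArg Polynomial.roots hprod
    rwa [h1, h1, Polynomial.roots_multiset_prod_X_sub_C,
      Polynomial.roots_multiset_prod_X_sub_C] at hroots
  have hkey : f ∘ Tuple.sort f = g ∘ Tuple.sort g := by
    have hpermf := (Tuple.sort f).ofFn_comp_perm f
    have hpermg := (Tuple.sort g).ofFn_comp_perm g
    have hofn : (List.ofFn f : Multiset ℝ) = (List.ofFn g : Multiset ℝ) := by
      rw [← Fin.univ_val_map, ← Fin.univ_val_map]
      exact hms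
    have hperm : (List.ofFn (f ∘ Tuple.sort f)).Perm (List.ofFn (g ∘ Tuple.sort g)) :=
      hpermf.trans ((Multiset.coe_eq_coe.mp hofn).trans hpermg.symm)
    exact List.ofFn_injective (hperm.eq_of_sortedLE
      (Tuple.monotone_sort f).sortedLE_ofFn (Tuple.monotone_sort g).sortedLE_ofFn)
  refine sim_trans hsimA (sim_trans (sim_diag_perm f (Tuple.sort f)) ?_)
  refine sim_trans ?_ (sim_symm hsimB)
  rw [hkey]
  exact sim_symm (sim_diag_perm g (Tuple.sort g))

end Real

section Graph

lemma map_graph_matrix (φ : RatFunc ℚ →+* ℝ) (t : ℝ) (hφX : φ RatFunc.X = t)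
    (G : SimpleGraph (Fin n)) [DecidableRel G.Adj] :
    (G.adjMatrix (RatFunc ℚ)
      - (RatFunc.X : RatFunc ℚ) • Matrix.diagonal (fun i => (G.degree i : RatFunc ℚ))).map φ
    = G.adjMatrix ℝ - t • Matrix.diagonal (fun i => (G.degree i : ℝ)) := by
  ext i j
  simp only [Matrix.map_apply, Matrix.sub_apply, Matrix.smul_apply, smul_eq_mul, map_sub, map_mul,
    hφX, SimpleGraph.adjMatrix_apply, Matrix.diagonal_apply]
  congr 1
  · split <;> simp
  · congr 1
    split <;> simp [map_natCast]

lemma herm_graph_matrix (t : ℝ) (G : SimpleGraph (Fin n)) [DecidableRel G.Adj] :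
    (G.adjMatrix ℝ - t • Matrix.diagonal (fun i => (G.degree i : ℝ))).IsHermitian := by
  have h : Matrix.conjTranspose (G.adjMatrix ℝ - t • Matrix.diagonal (fun i => (G.degree i : ℝ)))
      = G.adjMatrix ℝ - t • Matrix.diagonal (fun i => (G.degree i : ℝ)) := by
    rw [Matrix.conjTranspose_eq_transpose_of_trivial, Matrix.transpose_sub,
      Matrix.transpose_smul, Matrix.diagonal_transpose, SimpleGraph.transpose_adjMatrix]
  exact h

end Graph

end GCPAux

/-- For graphs `G`, `H` on vertex set `{1,…,n}`, the matrices `A(G) − μD(G)` and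
`A(H) − μD(H)`, viewed over the rational function field `ℚ(μ)`, are similar over `ℚ(μ)`
if and only if `G` and `H` have the same generalized characteristic polynomial
`det(tI − (A − μD))` over `ℚ(μ)`. -/
theorem similar_over_ratFunc_iff_same_generalized_charpoly
    (n : ℕ) (G H : SimpleGraph (Fin n)) [DecidableRel G.Adj] [DecidableRel H.Adj] :
    (∃ M : Matrix (Fin n) (Fin n) (RatFunc ℚ), IsUnit M ∧
        M⁻¹ * (G.adjMatrix (RatFunc ℚ)
          - (RatFunc.X : RatFunc ℚ) • Matrix.diagonal (fun i => (G.degree i : RatFunc ℚ))) * M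
        = H.adjMatrix (RatFunc ℚ)
          - (RatFunc.X : RatFunc ℚ) • Matrix.diagonal (fun i => (H.degree i : RatFunc ℚ))) ↔
      (G.adjMatrix (RatFunc ℚ)
          - (RatFunc.X : RatFunc ℚ) • Matrix.diagonal (fun i => (G.degree i : RatFunc ℚ))).charpoly
        = (H.adjMatrix (RatFunc ℚ)
          - (RatFunc.X : RatFunc ℚ) • Matrix.diagonal (fun i => (H.degree i : RatFunc ℚ))).charpoly := by
  classical
  constructor
  · intro hsim
    exact GCPAux.charpoly_of_sim hsim
  · intro h
    have htZ : Transcendental ℤ (liouvilleNumber 3) :=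
      transcendental_liouvilleNumber (by norm_num)
    have htQ : Transcendental ℚ (liouvilleNumber 3) := fun halg =>
      htZ ((IsFractionRing.isAlgebraic_iff ℤ ℚ ℝ).mpr halg)
    have hinj : Function.Injective
        ((Polynomial.aeval (liouvilleNumber 3) : ℚ[X] →ₐ[ℚ] ℝ) : ℚ[X] →+* ℝ) :=
      transcendental_iff_injective.mp htQ
    set φ : RatFunc ℚ →+* ℝ := IsFractionRing.lift hinj with hφ
    have hφX : φ RatFunc.X = liouvilleNumber 3 := by
      rw [hφ, ← RatFunc.algebraMap_X, IsFractionRing.lift_algebraMap]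
      simp
    haveI : Infinite (RatFunc ℚ) := Infinite.of_injective (algebraMap ℚ[X] (RatFunc ℚ))
      (IsFractionRing.injective _ _)
    show GCPAux.Sim _ _
    refine GCPAux.descent φ _ _ ?_
    rw [GCPAux.map_graph_matrix φ _ hφX G, GCPAux.map_graph_matrix φ _ hφX H]
    apply GCPAux.real_sim (GCPAux.herm_graph_matrix _ G) (GCPAux.herm_graph_matrix _ H)
    rw [← GCPAux.map_graph_matrix φ _ hφX G, ← GCPAux.map_graph_matrix φ _ hφX H,
      Matrix.charpoly_map, Matrix.charpoly_map, h]
end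

section
/- Let G and H be finite simple graphs on the same vertex set {1,…,n}, with adjacency matrices A(G), A(H) and degree matrices D(G), D(H). If G and H are degree-similar (there exists an invertible real matrix M with M⁻¹A(G)M = A(H) and M⁻¹D(G)M = D(H)), then the matrices A(G) − μD(G) and A(H) − μD(H), viewed over the rational function field ℚ(μ), are similar over ℚ(μ). -/
set_option synthInstance.maxHeartbeats 1000000
set_option maxHeartbeats 1000000

open Matrix

namespace DegSimAux

variable {n : ℕ}

/-- Sylvester-type matrix of the operator `X ↦ A X - X B` on vectorized matrices. -/
def sylv (R : Type*) [CommRing R] (n : ℕ) (A B : Matrix (Fin n) (Fin n) R) :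
    Matrix (Fin n × Fin n) (Fin n × Fin n) R :=
  Matrix.of fun p q =>
    (if p.2 = q.2 then A p.1 q.1 else 0) - (if p.1 = q.1 then B q.2 p.2 else 0)

lemma sylv_mulVec {R : Type*} [CommRing R] (A B X : Matrix (Fin n) (Fin n) R) (p : Fin n × Fin n) :
    (sylv R n A B).mulVec (fun q => X q.1 q.2) p = (A * X - X * B) p.1 p.2 := by
  classical
  simp only [sylv, Matrix.mulVec, dotProduct, Matrix.of_apply, sub_mul, ite_mul, zero_mul,
    Finset.sum_sub_distrib, Fintype.sum_prod_type, Matrix.sub_apply, Matrix.mul_apply]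
  congr 1
  · rw [Finset.sum_congr rfl fun k _ => Finset.sum_ite_eq (Finset.univ) p.2 (fun l => A p.1 k * X k l)]
    simp
  · rw [Finset.sum_comm]
    rw [Finset.sum_congr rfl fun l _ => Finset.sum_ite_eq (Finset.univ) p.1 (fun k => B l p.2 * X k l)]
    simp [mul_comm]

lemma sylv_map {R S : Type*} [CommRing R] [CommRing S] (φ : R →+* S)
    (A B : Matrix (Fin n) (Fin n) R) :
    (sylv R n A B).map φ = sylv S n (A.map φ) (B.map φ) := by
  ext p q
  simp [sylv, apply_ite φ]

/-- kernel of `Tᵀ T + Uᵀ U` over a linearly ordered field is common kernel of `T`, `U`. -/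
lemma kernel_sq {F : Type*} [Field F] [LinearOrder F] [IsStrictOrderedRing F] {m : Type*} [Fintype m]
    (T U : Matrix m m F) (v : m → F) (h : (Tᵀ * T + Uᵀ * U).mulVec v = 0) :
    T.mulVec v = 0 ∧ U.mulVec v = 0 := by
  have h0 : v ⬝ᵥ ((Tᵀ * T + Uᵀ * U).mulVec v) = 0 := by rw [h]; simp
  have key : ∀ W : Matrix m m F, v ⬝ᵥ (Wᵀ * W).mulVec v = W.mulVec v ⬝ᵥ W.mulVec v := by
    intro W
    rw [← Matrix.mulVec_mulVec, Matrix.dotProduct_mulVec, Matrix.vecMul_transpose]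
  rw [Matrix.add_mulVec, dotProduct_add, key, key] at h0
  have h1 : (0:F) ≤ T.mulVec v ⬝ᵥ T.mulVec v := Finset.sum_nonneg fun i _ => mul_self_nonneg _
  have h2 : (0:F) ≤ U.mulVec v ⬝ᵥ U.mulVec v := Finset.sum_nonneg fun i _ => mul_self_nonneg _
  have e1 : T.mulVec v ⬝ᵥ T.mulVec v = 0 := le_antisymm (by linarith) h1
  have e2 : U.mulVec v ⬝ᵥ U.mulVec v = 0 := le_antisymm (by linarith) h2
  exact ⟨dotProduct_self_eq_zero.mp e1, dotProduct_self_eq_zero.mp e2⟩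

lemma inv_map {F K : Type*} [Field F] [Field K] (φ : F →+* K) {m : Type*} [Fintype m]
    [DecidableEq m] (Q : Matrix m m F) (h : IsUnit Q.det) :
    (Q.map φ)⁻¹ = Q⁻¹.map φ := by
  apply Matrix.inv_eq_right_inv
  rw [← Matrix.map_mul, Matrix.mul_nonsing_inv _ h, Matrix.map_one _ (map_zero φ) (map_one φ)]

lemma adjMatrix_map {F K : Type*} [Field F] [Field K] (φ : F →+* K)
    (G : SimpleGraph (Fin n)) [DecidableRel G.Adj] :
    (G.adjMatrix F).map φ = G.adjMatrix K := by
  ext i j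
  simp [SimpleGraph.adjMatrix, apply_ite φ]

lemma diag_deg_map {F K : Type*} [Field F] [Field K] (φ : F →+* K) (f : Fin n → ℕ) :
    (Matrix.diagonal (fun i => (f i : F))).map φ = Matrix.diagonal (fun i => (f i : K)) := by
  rw [Matrix.diagonal_map (map_zero φ)]
  simp

/-- The key descent lemma: a pair of rational matrix identities with an invertible real
solution has an invertible rational solution. -/
lemma rational_solution (A1 B1 A2 B2 : Matrix (Fin n) (Fin n) ℚ)
    (M : Matrix (Fin n) (Fin n) ℝ) (hMdet : IsUnit M.det)
    (h1 : (A1.map (algebraMap ℚ ℝ)) * M = M * (B1.map (algebraMap ℚ ℝ)))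
    (h2 : (A2.map (algebraMap ℚ ℝ)) * M = M * (B2.map (algebraMap ℚ ℝ))) :
    ∃ N : Matrix (Fin n) (Fin n) ℚ, IsUnit N.det ∧ A1 * N = N * B1 ∧ A2 * N = N * B2 := by
  classical
  set ρ : ℚ →+* ℝ := algebraMap ℚ ℝ with hρdef
  set T1 : Matrix (Fin n × Fin n) (Fin n × Fin n) ℚ := sylv ℚ n A1 B1 with hT1def
  set T2 : Matrix (Fin n × Fin n) (Fin n × Fin n) ℚ := sylv ℚ n A2 B2 with hT2def
  set S : Matrix (Fin n × Fin n) (Fin n × Fin n) ℚ := T1ᵀ * T1 + T2ᵀ * T2 with hSdef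
  obtain ⟨L, L', d, hS⟩ := Matrix.Pivot.exists_list_transvec_mul_diagonal_mul_list_transvec S
  set P : Matrix (Fin n × Fin n) (Fin n × Fin n) ℚ :=
    (L.map Matrix.TransvectionStruct.toMatrix).prod with hPdef
  set Q : Matrix (Fin n × Fin n) (Fin n × Fin n) ℚ :=
    (L'.map Matrix.TransvectionStruct.toMatrix).prod with hQdef
  have hPdet : IsUnit P.det := by
    rw [hPdef, Matrix.TransvectionStruct.det_toMatrix_prod]; exact isUnit_one
  have hQdet : IsUnit Q.det := by
    rw [hQdef, Matrix.TransvectionStruct.det_toMatrix_prod]; exact isUnit_one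
  -- real side
  set w : Fin n × Fin n → ℝ := fun p => M p.1 p.2 with hwdef
  have hT1w : (T1.map ρ).mulVec w = 0 := by
    funext p
    rw [hT1def, sylv_map, sylv_mulVec]
    simp [h1, sub_self]
  have hT2w : (T2.map ρ).mulVec w = 0 := by
    funext p
    rw [hT2def, sylv_map, sylv_mulVec]
    simp [h2, sub_self]
  have hSw : (S.map ρ).mulVec w = 0 := by
    rw [hSdef, Matrix.map_add _ (map_add ρ), Matrix.map_mul, Matrix.map_mul, Matrix.transpose_map,
      Matrix.transpose_map, Matrix.add_mulVec, ← Matrix.mulVec_mulVec, ← Matrix.mulVec_mulVec,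
      hT1w, hT2w, Matrix.mulVec_zero, Matrix.mulVec_zero, add_zero]
  have hPρdet : IsUnit (P.map ρ).det := by
    rw [← RingHom.mapMatrix_apply, ← RingHom.map_det]
    exact hPdet.map ρ
  have hQρdet : IsUnit (Q.map ρ).det := by
    rw [← RingHom.mapMatrix_apply, ← RingHom.map_det]
    exact hQdet.map ρ
  obtain ⟨yr, hyrdef⟩ : ∃ yr : Fin n × Fin n → ℝ, yr = (Q.map ρ).mulVec w := ⟨_, rfl⟩
  have hSmap : S.map ρ = (P.map ρ) * Matrix.diagonal (fun z => ρ (d z)) * (Q.map ρ) := by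
    rw [hS, Matrix.map_mul, Matrix.map_mul, Matrix.diagonal_map (map_zero ρ)]
  have hdiagyr : (Matrix.diagonal (fun z => ρ (d z))).mulVec yr = 0 := by
    have h0 : (P.map ρ).mulVec ((Matrix.diagonal (fun z => ρ (d z))).mulVec yr) = 0 := by
      rw [hyrdef, Matrix.mulVec_mulVec, Matrix.mulVec_mulVec, ← hSmap, hSw]
    calc (Matrix.diagonal (fun z => ρ (d z))).mulVec yr
        = (((P.map ρ)⁻¹ * (P.map ρ)) * Matrix.diagonal (fun z => ρ (d z))).mulVec yr := by
          rw [Matrix.nonsing_inv_mul _ hPρdet, Matrix.one_mul]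
      _ = ((P.map ρ)⁻¹).mulVec ((P.map ρ).mulVec ((Matrix.diagonal (fun z => ρ (d z))).mulVec yr)) := by
          rw [Matrix.mulVec_mulVec, Matrix.mulVec_mulVec, Matrix.mul_assoc]
      _ = 0 := by rw [h0, Matrix.mulVec_zero]
  have hyr0 : ∀ z, d z ≠ 0 → yr z = 0 := by
    intro z hz
    have := congrFun hdiagyr z
    rw [Matrix.mulVec_diagonal] at this
    have hρz : ρ (d z) ≠ 0 := by
      simpa using hz
    exact (mul_eq_zero.mp this).resolve_left hρz
  -- determinant polynomial
  set Qi : Matrix (Fin n × Fin n) (Fin n × Fin n) ℚ := Q⁻¹ with hQidef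
  set NP : Matrix (Fin n) (Fin n) (MvPolynomial (Fin n × Fin n) ℚ) :=
    Matrix.of fun i j => ∑ z : Fin n × Fin n,
      if d z = 0 then MvPolynomial.C (Qi (i, j) z) * MvPolynomial.X z else 0 with hNPdef
  have hNPdet : NP.det ≠ 0 := by
    set φ : MvPolynomial (Fin n × Fin n) ℚ →+* ℝ := MvPolynomial.eval₂Hom ρ yr with hφdef
    have hmap : NP.map φ = M := by
      ext i j
      rw [hNPdef]
      simp only [Matrix.map_apply, Matrix.of_apply, map_sum]
      have : ∀ z : Fin n × Fin n,
          φ (if d z = 0 then MvPolynomial.C (Qi (i, j) z) * MvPolynomial.X z else 0)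
            = ((Qi.map ρ) (i, j) z) * yr z := by
        intro z
        by_cases hz : d z = 0
        · simp [hz, hφdef]
        · simp [hz, hyr0 z hz]
      rw [Finset.sum_congr rfl fun z _ => this z]
      have hQiρ : Qi.map ρ = (Q.map ρ)⁻¹ := by
        rw [hQidef, ← inv_map ρ Q hQdet]
      have : ∑ z : Fin n × Fin n, (Qi.map ρ) (i, j) z * yr z = ((Qi.map ρ).mulVec yr) (i, j) := rfl
      rw [this, hQiρ, hyrdef, Matrix.mulVec_mulVec, Matrix.nonsing_inv_mul _ hQρdet,
        Matrix.one_mulVec]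
    intro hc
    have : φ NP.det = M.det := by
      rw [RingHom.map_det, RingHom.mapMatrix_apply, hmap]
    rw [hc, map_zero] at this
    exact hMdet.ne_zero this.symm
  -- a rational point where the det polynomial doesn't vanish
  have hpoint : ∃ c : Fin n × Fin n → ℚ, MvPolynomial.eval c NP.det ≠ 0 := by
    by_contra hcon
    push_neg at hcon
    exact hNPdet (MvPolynomial.funext fun c => by simp [hcon c])
  obtain ⟨c, hc⟩ := hpoint
  set yq : Fin n × Fin n → ℚ := fun z => if d z = 0 then c z else 0 with hyqdef
  set N : Matrix (Fin n) (Fin n) ℚ := Matrix.of fun i j => ∑ z : Fin n × Fin n, Qi (i, j) z * yq z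
    with hNdef
  have hNeval : (NP.map (MvPolynomial.eval c)) = N := by
    ext i j
    rw [hNPdef, hNdef]
    simp only [Matrix.map_apply, Matrix.of_apply, map_sum]
    refine Finset.sum_congr rfl fun z _ => ?_
    by_cases hz : d z = 0 <;> simp [hz, hyqdef]
  have hNdet : IsUnit N.det := by
    rw [isUnit_iff_ne_zero, ← hNeval, ← RingHom.mapMatrix_apply, ← RingHom.map_det]
    exact hc
  -- N is a rational solution of the linear system
  have hvecN : (fun p : Fin n × Fin n => N p.1 p.2) = Qi.mulVec yq := by
    funext p
    rw [hNdef]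
    simp [Matrix.mulVec, dotProduct]
  have hQvec : Q.mulVec (fun p : Fin n × Fin n => N p.1 p.2) = yq := by
    rw [hvecN, hQidef, Matrix.mulVec_mulVec, Matrix.mul_nonsing_inv _ hQdet, Matrix.one_mulVec]
  have hSvec : S.mulVec (fun p : Fin n × Fin n => N p.1 p.2) = 0 := by
    rw [hS, ← Matrix.mulVec_mulVec, ← Matrix.mulVec_mulVec, hQvec]
    have : (Matrix.diagonal d).mulVec yq = 0 := by
      funext z
      rw [Matrix.mulVec_diagonal]
      by_cases hz : d z = 0 <;> simp [hz, hyqdef]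
    rw [this, Matrix.mulVec_zero]
  obtain ⟨k1, k2⟩ := kernel_sq T1 T2 _ hSvec
  have e1 : A1 * N = N * B1 := by
    rw [← sub_eq_zero]
    ext i j
    have := congrFun k1 (i, j)
    rw [hT1def, sylv_mulVec] at this
    simpa using this
  have e2 : A2 * N = N * B2 := by
    rw [← sub_eq_zero]
    ext i j
    have := congrFun k2 (i, j)
    rw [hT2def, sylv_mulVec] at this
    simpa using this
  exact ⟨N, hNdet, e1, e2⟩

end DegSimAux

/-- If two graphs `G`, `H` on vertex set `{1,…,n}` are degree-similar (there is an invertible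
real matrix `M` with `M⁻¹ A(G) M = A(H)` and `M⁻¹ D(G) M = D(H)`), then the matrices
`A(G) − μD(G)` and `A(H) − μD(H)`, viewed over the rational function field `ℚ(μ)`,
are similar over `ℚ(μ)`. -/
theorem degree_similar_implies_similar_over_ratFunc
    (n : ℕ) (G H : SimpleGraph (Fin n)) [DecidableRel G.Adj] [DecidableRel H.Adj]
    (M : Matrix (Fin n) (Fin n) ℝ) (hM : IsUnit M)
    (hA : M⁻¹ * G.adjMatrix ℝ * M = H.adjMatrix ℝ)
    (hD : M⁻¹ * Matrix.diagonal (fun i => (G.degree i : ℝ)) * M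
        = Matrix.diagonal (fun i => (H.degree i : ℝ))) :
    ∃ N : Matrix (Fin n) (Fin n) (RatFunc ℚ), IsUnit N ∧
      N⁻¹ * (G.adjMatrix (RatFunc ℚ)
          - (RatFunc.X : RatFunc ℚ) • Matrix.diagonal (fun i => (G.degree i : RatFunc ℚ))) * N
        = H.adjMatrix (RatFunc ℚ)
          - (RatFunc.X : RatFunc ℚ) • Matrix.diagonal (fun i => (H.degree i : RatFunc ℚ)) := by
  classical
  have hMdet : IsUnit M.det := (Matrix.isUnit_iff_isUnit_det M).mp hM
  have hAM : G.adjMatrix ℝ * M = M * H.adjMatrix ℝ := by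
    rw [← hA, ← Matrix.mul_assoc, ← Matrix.mul_assoc, Matrix.mul_nonsing_inv _ hMdet,
      Matrix.one_mul]
  have hDM : Matrix.diagonal (fun i => (G.degree i : ℝ)) * M
      = M * Matrix.diagonal (fun i => (H.degree i : ℝ)) := by
    rw [← hD, ← Matrix.mul_assoc, ← Matrix.mul_assoc, Matrix.mul_nonsing_inv _ hMdet,
      Matrix.one_mul]
  obtain ⟨N₀, hN₀det, e1, e2⟩ := DegSimAux.rational_solution
    (G.adjMatrix ℚ) (H.adjMatrix ℚ)
    (Matrix.diagonal (fun i => (G.degree i : ℚ))) (Matrix.diagonal (fun i => (H.degree i : ℚ)))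
    M hMdet
    (by rw [DegSimAux.adjMatrix_map, DegSimAux.adjMatrix_map]; exact hAM)
    (by rw [DegSimAux.diag_deg_map, DegSimAux.diag_deg_map]; exact hDM)
  set ψ : ℚ →+* RatFunc ℚ := algebraMap ℚ (RatFunc ℚ) with hψdef
  set N : Matrix (Fin n) (Fin n) (RatFunc ℚ) := N₀.map ψ with hNdef
  have hNdet : IsUnit N.det := by
    rw [hNdef, ← RingHom.mapMatrix_apply, ← RingHom.map_det]
    exact hN₀det.map ψ
  refine ⟨N, (Matrix.isUnit_iff_isUnit_det N).mpr hNdet, ?_⟩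
  have hAN : G.adjMatrix (RatFunc ℚ) * N = N * H.adjMatrix (RatFunc ℚ) := by
    rw [← DegSimAux.adjMatrix_map ψ G, ← DegSimAux.adjMatrix_map ψ H, hNdef,
      ← Matrix.map_mul, ← Matrix.map_mul, e1]
  have hDN : Matrix.diagonal (fun i => (G.degree i : RatFunc ℚ)) * N
      = N * Matrix.diagonal (fun i => (H.degree i : RatFunc ℚ)) := by
    rw [← DegSimAux.diag_deg_map ψ, ← DegSimAux.diag_deg_map ψ, hNdef,
      ← Matrix.map_mul, ← Matrix.map_mul, e2]
  have key : (G.adjMatrix (RatFunc ℚ)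
      - (RatFunc.X : RatFunc ℚ) • Matrix.diagonal (fun i => (G.degree i : RatFunc ℚ))) * N
      = N * (H.adjMatrix (RatFunc ℚ)
      - (RatFunc.X : RatFunc ℚ) • Matrix.diagonal (fun i => (H.degree i : RatFunc ℚ))) := by
    rw [Matrix.sub_mul, Matrix.mul_sub, hAN, Matrix.smul_mul, Matrix.mul_smul, hDN]
  rw [Matrix.mul_assoc, key, ← Matrix.mul_assoc, Matrix.nonsing_inv_mul _ hNdet, Matrix.one_mul]
end
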